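/- Homogeneity and unit coefficients of the recursion polynomials: for every k ≥ 1, a_k is a homogeneous polynomial of degree k in x, y and b_k is a homogeneous polynomial of degree k−1 in x, y; moreover for every k ≥ 2 the coefficient of x²y^{k−2} in a_k has absolute value 1, and for every k ≥ 1 the coefficient of y^{k−1} in b_k has absolute value 1. -/

import Mathlib

/- STATEMENT 9: Homogeneity and unit coefficients of the recursion polynomials
   a_k (homogeneous of degree k) and b_k (homogeneous of degree k−1),
   with |coeff of x²y^{k−2} in a_k| = 1 (k ≥ 2) and |coeff of y^{k−1} in b_k| = 1 (k ≥ 1). -/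

/-- The polynomials a_k ∈ ℂ[x,y] : a₁ = 0, a₂ = x²,
    a_k = −y·a_{k−1} + (4(2k−3)(2k−5))⁻¹·x²·a_{k−2} for k ≥ 3. -/
noncomputable def aPoly : ℕ → MvPolynomial (Fin 2) ℂ
  | 0 => 0
  | 1 => 0
  | 2 => MvPolynomial.X 0 ^ 2
  | (k + 3) => -(MvPolynomial.X 1) * aPoly (k + 2)
      + MvPolynomial.C (4 * (2 * (k : ℂ) + 3) * (2 * (k : ℂ) + 1))⁻¹ *
        (MvPolynomial.X 0 ^ 2 * aPoly (k + 1))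

/-- The polynomials b_k ∈ ℂ[x,y] : b₁ = 1, b₂ = −y + x/2,
    b_k = −y·b_{k−1} + (4(2k−3)(2k−5))⁻¹·x²·b_{k−2} for k ≥ 3. -/
noncomputable def bPoly : ℕ → MvPolynomial (Fin 2) ℂ
  | 0 => 0
  | 1 => 1
  | 2 => -(MvPolynomial.X 1) + MvPolynomial.C ((2 : ℂ)⁻¹) * MvPolynomial.X 0
  | (k + 3) => -(MvPolynomial.X 1) * bPoly (k + 2)
      + MvPolynomial.C (4 * (2 * (k : ℂ) + 3) * (2 * (k : ℂ) + 1))⁻¹ *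
        (MvPolynomial.X 0 ^ 2 * bPoly (k + 1))

open MvPolynomial

lemma aHom : ∀ k, (aPoly k).IsHomogeneous k := by
  intro k
  induction k using Nat.strong_induction_on with
  | _ k ih =>
    match k with
    | 0 => exact isHomogeneous_zero _ _ _
    | 1 => exact isHomogeneous_zero _ _ _
    | 2 => exact isHomogeneous_X_pow _ _
    | (k + 3) =>
      rw [aPoly]
      have h1 := ((isHomogeneous_X ℂ (1 : Fin 2)).neg.mul (ih (k+2) (by omega)))
      have h2 := (((isHomogeneous_X_pow (R := ℂ) (0 : Fin 2) 2).mul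
        (ih (k+1) (by omega))).C_mul ((4 * (2 * (k : ℂ) + 3) * (2 * (k : ℂ) + 1))⁻¹))
      have e1 : 1 + (k + 2) = k + 3 := by omega
      have e2 : 2 + (k + 1) = k + 3 := by omega
      exact (e1 ▸ h1).add (e2 ▸ h2)

lemma bHom : ∀ k, (bPoly (k + 1)).IsHomogeneous k := by
  intro k
  induction k using Nat.strong_induction_on with
  | _ k ih =>
    match k with
    | 0 => exact isHomogeneous_one _ _
    | 1 =>
      exact ((isHomogeneous_X ℂ (1 : Fin 2)).neg.add (isHomogeneous_C_mul_X _ 0))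
    | (k + 2) =>
      rw [show k + 2 + 1 = k + 3 from rfl, bPoly]
      have h1 := ((isHomogeneous_X ℂ (1 : Fin 2)).neg.mul (ih (k+1) (by omega)))
      have h2 := (((isHomogeneous_X_pow (R := ℂ) (0 : Fin 2) 2).mul
        (ih k (by omega))).C_mul ((4 * (2 * (k : ℂ) + 3) * (2 * (k : ℂ) + 1))⁻¹))
      have e1 : 1 + (k + 1) = k + 2 := by omega
      have e2 : 2 + k = k + 2 := by omega
      exact (e1 ▸ h1).add (e2 ▸ h2)

lemma aPure : ∀ k m, (aPoly k).coeff (Finsupp.single 1 m) = 0 := by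
  intro k
  induction k using Nat.strong_induction_on with
  | _ k ih =>
    match k with
    | 0 => intro m; simp [aPoly]
    | 1 => intro m; simp [aPoly]
    | 2 =>
      intro m
      rw [aPoly, coeff_single_X_pow]
      simp [Fin.ext_iff]
    | (k + 3) =>
      intro m
      rw [aPoly, coeff_add, coeff_C_mul, X_pow_eq_monomial, coeff_monomial_mul']
      rw [neg_mul, coeff_neg, coeff_X_mul']
      have hle : ¬ Finsupp.single (0 : Fin 2) 2 ≤ Finsupp.single 1 m := by
        rw [Finsupp.single_le_iff]
        simp [Finsupp.single_apply, Fin.ext_iff]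
      rw [if_neg hle]
      rcases m with _ | m
      · simp
      · rw [if_pos (by simp), ← Finsupp.single_tsub]
        simp [ih (k + 2) (by omega)]

lemma aCoeff : ∀ k, (aPoly (k + 2)).coeff (Finsupp.single 0 2 + Finsupp.single 1 k)
    = (-1 : ℂ) ^ k := by
  intro k
  induction k using Nat.strong_induction_on with
  | _ k ih =>
    match k with
    | 0 =>
      rw [aPoly, X_pow_eq_monomial, coeff_monomial]
      simp
    | (k + 1) =>
      rw [show k + 1 + 2 = k + 3 from rfl, aPoly, coeff_add, coeff_C_mul,
        X_pow_eq_monomial, neg_mul, coeff_neg]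
      have hd : Finsupp.single (0 : Fin 2) 2 + Finsupp.single 1 (k + 1)
          = Finsupp.single 1 1 + (Finsupp.single 0 2 + Finsupp.single 1 k) := by
        rw [show k + 1 = 1 + k from by omega, Finsupp.single_add]
        abel
      rw [hd, coeff_X_mul]
      rw [show Finsupp.single (1 : Fin 2) 1 + (Finsupp.single 0 2 + Finsupp.single 1 k)
          = Finsupp.single 0 2 + (Finsupp.single 1 1 + Finsupp.single 1 k) from by abel,
        coeff_monomial_mul, ← Finsupp.single_add, aPure]
      rw [ih k (by omega)]
      ring

lemma bCoeff : ∀ k, (bPoly (k + 1)).coeff (Finsupp.single 1 k) = (-1 : ℂ) ^ k := by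
  intro k
  induction k using Nat.strong_induction_on with
  | _ k ih =>
    match k with
    | 0 => simp [bPoly]
    | 1 =>
      rw [bPoly, coeff_add, coeff_neg, coeff_C_mul, coeff_single_X, coeff_single_X]
      norm_num [Fin.ext_iff]
    | (k + 2) =>
      rw [show k + 2 + 1 = k + 3 from rfl, bPoly, coeff_add, coeff_C_mul,
        X_pow_eq_monomial, neg_mul, coeff_neg, coeff_monomial_mul']
      have hle : ¬ Finsupp.single (0 : Fin 2) 2 ≤ Finsupp.single 1 (k + 2) := by
        rw [Finsupp.single_le_iff]
        simp [Finsupp.single_apply, Fin.ext_iff]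
      rw [if_neg hle]
      rw [show Finsupp.single (1 : Fin 2) (k + 2) = Finsupp.single 1 1 + Finsupp.single 1 (k + 1)
        from by rw [← Finsupp.single_add]; congr 1; omega, coeff_X_mul, ih (k + 1) (by omega)]
      ring

theorem recursion_polys_homogeneous_and_unit_coeffs :
    (∀ k : ℕ, 1 ≤ k → (aPoly k).IsHomogeneous k) ∧
    (∀ k : ℕ, 1 ≤ k → (bPoly k).IsHomogeneous (k - 1)) ∧
    (∀ k : ℕ, 2 ≤ k →
      ‖(aPoly k).coeff (Finsupp.single 0 2 + Finsupp.single 1 (k - 2))‖ = 1) ∧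
    (∀ k : ℕ, 1 ≤ k →
      ‖(bPoly k).coeff (Finsupp.single 1 (k - 1))‖ = 1) := by
  refine ⟨fun k _ => aHom k, ?_, ?_, ?_⟩
  · rintro (_ | k) h
    · omega
    · simpa using bHom k
  · rintro (_ | _ | k) h
    · omega
    · omega
    · rw [show k + 2 - 2 = k from rfl, aCoeff k]
      simp
  · rintro (_ | k) h
    · omega
    · rw [show k + 1 - 1 = k from rfl, bCoeff k]
      simp
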